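/- If G is a k-connected graph, S is a separator of G with |S| = k, and C is the vertex set of a connected component of G − S, then the graph obtained from the induced subgraph G[C ∪ S] by adding all edges between pairs of vertices of S (making S a clique) is also k-connected. -/

import Mathlib

open scoped Classical
open EuclideanGeometry Real

noncomputable section

/-- Points in the Euclidean plane. -/
abbrev Pt := EuclideanSpace ℝ (Fin 2)

/-- A graph is `k`-connected if it has more than `k` vertices and remains connected
after deleting any fewer than `k` vertices. -/
def KConnected {V : Type*} [Fintype V] (k : ℕ) (G : SimpleGraph V) : Prop :=
  k < Fintype.card V ∧ ∀ S : Finset V, S.card < k → (G.induce {v : V | v ∉ S}).Connected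

/-- `G` is a unit disk graph realized by the (injective) point placement `p`:
two distinct vertices are adjacent iff their Euclidean distance is at most 1. -/
def IsUnitDiskGraph {V : Type*} (G : SimpleGraph V) (p : V → Pt) : Prop :=
  Function.Injective p ∧ ∀ u v, G.Adj u v ↔ u ≠ v ∧ dist (p u) (p v) ≤ 1

/-- Euclidean length of an edge. -/
def edgeLen {V : Type*} (p : V → Pt) : Sym2 V → ℝ :=
  Sym2.lift ⟨fun a b => dist (p a) (p b), fun a b => dist_comm (p a) (p b)⟩

/-- Total Euclidean edge length of a graph. -/
def glen {V : Type*} [Fintype V] (p : V → Pt) (G : SimpleGraph V) : ℝ :=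
  ∑ e ∈ G.edgeFinset, edgeLen p e

/-- `F` is a minimum-length `k`-connected spanning subgraph (`k`-MSS) of `G`. -/
def IsMSS {V : Type*} [Fintype V] (k : ℕ) (p : V → Pt) (G F : SimpleGraph V) : Prop :=
  F ≤ G ∧ KConnected k F ∧
    ∀ F' : SimpleGraph V, F' ≤ G → KConnected k F' → glen p F ≤ glen p F'

/-- The complete graph on the vertices of `S` (as a graph on all of `V`). -/
def cliqueOn {V : Type*} (S : Finset V) : SimpleGraph V where
  Adj u v := u ≠ v ∧ u ∈ S ∧ v ∈ S
  symm := ⟨by rintro u v ⟨h, hu, hv⟩; exact ⟨h.symm, hv, hu⟩⟩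
  loopless := ⟨by rintro u ⟨h, _⟩; exact h rfl⟩

/-- If `G` is `k`-connected, `S` is a separator of `G` with `|S| = k`, and `C` is the
vertex set of a connected component of `G − S`, then the marked `S`-component
(`G[C ∪ S]` with `S` turned into a clique) is also `k`-connected. -/
theorem marked_component_kconnected {V : Type*} [Fintype V] (k : ℕ) (G : SimpleGraph V)
    (hG : KConnected k G) (S : Finset V) (hcard : S.card = k)
    (hsep : ¬ (G.induce {v : V | v ∉ S}).Connected)
    (comp : (G.induce {v : V | v ∉ S}).ConnectedComponent) (C : Set V)
    (hC : C = Subtype.val '' comp.supp) :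
    KConnected k ((G ⊔ cliqueOn S).induce (C ∪ ↑S)) := by
  classical
  obtain ⟨hk, hconn⟩ := hG
  -- every vertex of C is outside S
  have hCnotS : ∀ v ∈ C, v ∉ S := by
    intro v hv
    rw [hC] at hv
    obtain ⟨x, _, rfl⟩ := hv
    exact x.2
  -- C is closed under G-adjacency among vertices outside S
  have hclose : ∀ v ∈ C, ∀ u, G.Adj v u → u ∉ S → u ∈ C := by
    intro v hv u hadj hu
    rw [hC] at hv ⊢
    obtain ⟨x, hx, rfl⟩ := hv
    refine ⟨⟨u, hu⟩, ?_, rfl⟩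
    rw [SimpleGraph.ConnectedComponent.mem_supp_iff] at hx ⊢
    rw [← hx]
    refine SimpleGraph.ConnectedComponent.sound ?_
    refine SimpleGraph.Adj.reachable ?_
    show G.Adj u (x : V)
    exact hadj.symm
  -- C is nonempty
  obtain ⟨v₀, hv₀⟩ := comp.exists_rep
  have hv₀C : (v₀ : V) ∈ C := by
    rw [hC]
    exact ⟨v₀, by rw [SimpleGraph.ConnectedComponent.mem_supp_iff]; exact hv₀, rfl⟩
  constructor
  · -- cardinality
    have hsub : insert (↑v₀) S ⊆ (C ∪ ↑S).toFinset := by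
      intro x hx
      rw [Set.mem_toFinset]
      rcases Finset.mem_insert.mp hx with rfl | h
      · exact Or.inl hv₀C
      · exact Or.inr h
    calc k < (insert (↑v₀) S).card := by
            rw [Finset.card_insert_of_notMem v₀.2, hcard]; omega
      _ ≤ (C ∪ ↑S).toFinset.card := Finset.card_le_card hsub
      _ = Fintype.card ↥(C ∪ ↑S) := Set.toFinset_card _
  · intro T hT
    set T' : Finset V := T.image Subtype.val with hT'def
    have hT'card : T'.card = T.card :=
      Finset.card_image_of_injective _ Subtype.val_injective
    have hT'k : T'.card < k := by omega
    have hGD := hconn T' hT'k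
    have hTmem' : ∀ (w : ↥(C ∪ ↑S)), (w : V) ∉ T' → w ∈ {w : ↥(C ∪ ↑S) | w ∉ T} := by
      intro w hw
      exact fun hmem => hw (Finset.mem_image_of_mem _ hmem)
    -- some vertex of S avoids T'
    obtain ⟨s₀, hs₀S, hs₀T⟩ : ∃ s ∈ S, s ∉ T' := by
      by_contra hcon
      push_neg at hcon
      have : S ⊆ T' := fun s hs => hcon s hs
      have := Finset.card_le_card this
      omega
    set K := (((G ⊔ cliqueOn S).induce (C ∪ ↑S)).induce {w : ↥(C ∪ ↑S) | w ∉ T}) with hKdef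
    -- key lemma: from any vertex of C ∪ S avoiding T', we can reach (inside K)
    -- a vertex of S avoiding T
    have key : ∀ (a t : ↥{v : V | v ∉ T'}) (p : (G.induce {v : V | v ∉ T'}).Walk a t)
        (htS : (t : V) ∈ S) (ha : (a : V) ∈ C ∪ ↑S),
        ∃ y : ↥{w : ↥(C ∪ ↑S) | w ∉ T}, ((y : ↥(C ∪ ↑S)) : V) ∈ S ∧
          K.Reachable ⟨⟨(a : V), ha⟩, hTmem' _ a.2⟩ y := by
      intro a t p
      induction p with
      | @nil u =>
        intro htS ha
        exact ⟨⟨⟨_, ha⟩, hTmem' _ u.2⟩, htS, SimpleGraph.Reachable.refl _⟩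
      | @cons a b c h q ih =>
        intro htS ha
        by_cases haS : (a : V) ∈ S
        · exact ⟨⟨⟨(a : V), ha⟩, hTmem' _ a.2⟩, haS, SimpleGraph.Reachable.refl _⟩
        · have haC : (a : V) ∈ C := by
            rcases ha with h' | h'
            · exact h'
            · exact absurd h' haS
          have hadj : G.Adj (a : V) (b : V) := h
          by_cases hbS : (b : V) ∈ S
          · have hb : (b : V) ∈ C ∪ ↑S := Or.inr hbS
            refine ⟨⟨⟨(b : V), hb⟩, hTmem' _ b.2⟩, hbS, ?_⟩
            refine SimpleGraph.Adj.reachable ?_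
            show (G ⊔ cliqueOn S).Adj (a : V) (b : V)
            exact Or.inl hadj
          · have hbC : (b : V) ∈ C := hclose _ haC _ hadj hbS
            obtain ⟨y, hyS, hyr⟩ := ih htS (Or.inl hbC)
            refine ⟨y, hyS, SimpleGraph.Reachable.trans ?_ hyr⟩
            refine SimpleGraph.Adj.reachable ?_
            show (G ⊔ cliqueOn S).Adj (a : V) (b : V)
            exact Or.inl hadj
    -- reduce to a reachability statement about arbitrary vertices of K
    have reach : ∀ x : ↥{w : ↥(C ∪ ↑S) | w ∉ T},
        ∃ y : ↥{w : ↥(C ∪ ↑S) | w ∉ T}, ((y : ↥(C ∪ ↑S)) : V) ∈ S ∧ K.Reachable x y := by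
      intro x
      have hxT' : (x.1.1 : V) ∉ T' := by
        intro hmem
        obtain ⟨w, hwT, hw⟩ := Finset.mem_image.mp hmem
        exact x.2 (by rwa [show w = x.1 from Subtype.ext hw] at hwT)
      obtain ⟨p⟩ := hGD.preconnected ⟨x.1.1, hxT'⟩ ⟨s₀, hs₀T⟩
      obtain ⟨y, hyS, hyr⟩ := key _ ⟨s₀, hs₀T⟩ p hs₀S x.1.2
      refine ⟨y, hyS, ?_⟩
      have hx : (⟨⟨x.1.1, x.1.2⟩, hTmem' _ hxT'⟩ :
          ↥{w : ↥(C ∪ ↑S) | w ∉ T}) = x := by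
        apply Subtype.ext; apply Subtype.ext; rfl
      rwa [hx] at hyr
    rw [SimpleGraph.connected_iff]
    constructor
    · intro x y
      obtain ⟨yx, hyxS, rx⟩ := reach x
      obtain ⟨yy, hyyS, ry⟩ := reach y
      rcases eq_or_ne yx yy with rfl | hne
      · exact rx.trans ry.symm
      · refine rx.trans (SimpleGraph.Reachable.trans ?_ ry.symm)
        refine SimpleGraph.Adj.reachable ?_
        show (G ⊔ cliqueOn S).Adj ((yx : ↥(C ∪ ↑S)) : V) ((yy : ↥(C ∪ ↑S)) : V)
        refine Or.inr ⟨?_, hyxS, hyyS⟩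
        exact fun hval => hne (Subtype.ext (Subtype.ext hval))
    · exact ⟨⟨⟨s₀, Or.inr hs₀S⟩, hTmem' _ hs₀T⟩⟩
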